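/- arXiv:1611.05775 — 2 statements merged into one kernel-verified Lean document; each statement's English description precedes it below -/
import Mathlib

section
/- For every integer n ≥ 1, the number of (2n+1,2n+3)-core partitions with distinct parts equals the number of order ideals I of the poset P_{2n+1,2n+3} that contain no two consecutive integers (i.e., there is no a with both a ∈ I and a+1 ∈ I). -/
/-- A partition: a finite non-increasing list of positive integers. -/
structure CorePartition where
  parts : List ℕ
  sorted : parts.Pairwise (· ≥ ·)
  pos : ∀ p ∈ parts, 0 < p

namespace CorePartition

/-- The size of a partition: the sum of its parts. -/
def size (p : CorePartition) : ℕ := p.parts.sum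

/-- The conjugate partition evaluated at (0-indexed) column `j`:
the number of parts strictly greater than `j`. -/
def conj (p : CorePartition) (j : ℕ) : ℕ := (p.parts.filter (fun x => j < x)).length

/-- The hook length of the (0-indexed) cell `(i, j)` of the Young diagram:
`(λ_i − 1 − j) + (λ'_j − 1 − i) + 1`, i.e. `λ_i − i + λ'_j − j + 1` in 1-indexed terms. -/
def hook (p : CorePartition) (i j : ℕ) : ℕ :=
  (p.parts.getD i 0 - (j + 1)) + (p.conj j - (i + 1)) + 1

/-- A partition is an `s`-core if none of its hook lengths equals `s`. -/
def IsCore (p : CorePartition) (s : ℕ) : Prop :=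
  ∀ i j : ℕ, i < p.parts.length → j < p.parts.getD i 0 → p.hook i j ≠ s

/-- A partition has distinct parts if its parts are strictly decreasing. -/
def Distinct (p : CorePartition) : Prop := p.parts.Pairwise (· > ·)

end CorePartition

/-- `D n` is the set of `(2n+1, 2n+3)`-core partitions with distinct parts. -/
def D (n : ℕ) : Set CorePartition :=
  {p | p.IsCore (2 * n + 1) ∧ p.IsCore (2 * n + 3) ∧ p.Distinct}
/-- The underlying set of the poset `P_{s,t}`: nonnegative integers not of the form
`α·s + β·t` with `α, β` nonnegative integers. -/
def PosetElems (s t : ℕ) : Set ℕ := {m | ¬ ∃ a b : ℕ, m = a * s + b * t}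

/-- The order relation of `P_{s,t}`: `c ≤_P d` iff `d − c = α·s + β·t` for some
nonnegative integers `α, β`. -/
def PosetLe (s t c d : ℕ) : Prop := ∃ a b : ℕ, d = c + a * s + b * t

/-- An order ideal of the poset `P_{s,t}`: a subset `I` of the underlying set such that
`c ∈ I` whenever `c ≤_P d` for some `d ∈ I`. -/
def IsOrderIdeal (s t : ℕ) (I : Set ℕ) : Prop :=
  I ⊆ PosetElems s t ∧
    ∀ ⦃c d : ℕ⦄, c ∈ PosetElems s t → d ∈ I → PosetLe s t c d → c ∈ I



/-- beta number -/
def SAh (p : CorePartition) (i : ℕ) : ℕ := p.parts.getD i 0 + (p.parts.length - (i + 1))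

namespace SA
variable (p : CorePartition)

lemma lam_getElem {i : ℕ} (h : i < p.parts.length) : p.parts.getD i 0 = p.parts[i] :=
  List.getD_eq_getElem _ _ h

lemma lam_pos {i : ℕ} (h : i < p.parts.length) : 0 < p.parts.getD i 0 := by
  rw [lam_getElem p h]; exact p.pos _ (List.getElem_mem h)

lemma lam_anti {i m : ℕ} (him : i ≤ m) (hm : m < p.parts.length) :
    p.parts.getD m 0 ≤ p.parts.getD i 0 := by
  rw [lam_getElem p hm, lam_getElem p (lt_of_le_of_lt him hm)]
  rcases eq_or_lt_of_le him with rfl | h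
  · exact le_refl _
  · exact List.pairwise_iff_getElem.mp p.sorted i m _ _ h

lemma conj_le (j : ℕ) : p.conj j ≤ p.parts.length := List.length_filter_le _ _

lemma conj_anti {j1 j2 : ℕ} (h : j1 ≤ j2) : p.conj j2 ≤ p.conj j1 := by
  unfold CorePartition.conj
  apply List.Sublist.length_le
  apply List.monotone_filter_right
  intro x hx
  simp only [decide_eq_true_eq] at *
  omega

lemma conj_lower {i j : ℕ} (hi : i < p.parts.length) (hj : j < p.parts.getD i 0) :
    i + 1 ≤ p.conj j := by
  unfold CorePartition.conj
  have hsub : List.Sublist ((p.parts.take (i+1)).filter (fun x => decide (j < x))) (p.parts.filter (fun x => decide (j < x))) :=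
    (List.take_sublist _ _).filter _
  have heq : (p.parts.take (i+1)).filter (fun x => decide (j < x)) = p.parts.take (i+1) := by
    apply List.filter_eq_self.mpr
    intro x hx
    obtain ⟨d, hd, rfl⟩ := List.mem_iff_getElem.mp hx
    rw [List.getElem_take]
    simp only [decide_eq_true_eq]
    have hd' : d ≤ i := by simp [List.length_take] at hd; omega
    have := lam_anti p hd' hi
    rw [lam_getElem p hi, lam_getElem p (lt_of_le_of_lt hd' hi)] at this
    rw [lam_getElem p hi] at hj
    omega
  have hlen := hsub.length_le
  rw [heq, List.length_take] at hlen
  omega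

lemma conj_upper {m j : ℕ} (hm : m < p.parts.length) (hj : p.parts.getD m 0 ≤ j) :
    p.conj j ≤ m := by
  unfold CorePartition.conj
  conv_lhs => rw [← List.take_append_drop m p.parts]
  rw [List.filter_append, List.length_append]
  have h1 : ((p.parts.take m).filter (fun x => decide (j < x))).length ≤ m := by
    refine le_trans (List.length_filter_le _ _) ?_
    simp [List.length_take]
  have h2 : ((p.parts.drop m).filter (fun x => decide (j < x))) = [] := by
    apply List.filter_eq_nil_iff.mpr
    intro x hx
    obtain ⟨d, hd, rfl⟩ := List.mem_iff_getElem.mp hx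
    rw [List.getElem_drop]
    simp only [decide_eq_true_eq, not_lt]
    have h3 : m ≤ m + d := Nat.le_add_right _ _
    have h4 : m + d < p.parts.length := by simp [List.length_drop] at hd; omega
    have := lam_anti p h3 h4
    rw [lam_getElem p h4, lam_getElem p hm] at this
    rw [lam_getElem p hm] at hj
    omega
  rw [h2]
  simp only [List.length_nil]
  omega

lemma f_not_h {m j : ℕ} (hm : m < p.parts.length) :
    SAh p m ≠ j + (p.parts.length - p.conj j) := by
  have hck := conj_le p j
  simp only [SAh]
  rcases le_or_gt (p.parts.getD m 0) j with h | h
  · have := conj_upper p hm h; omega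
  · have := conj_lower p hm h; omega

lemma hook_add {i j : ℕ} (hi : i < p.parts.length) (hj : j < p.parts.getD i 0) :
    p.hook i j + (j + (p.parts.length - p.conj j)) = SAh p i := by
  have h1 := conj_lower p hi hj
  have h2 := conj_le p j
  simp only [SAh, CorePartition.hook]
  omega

lemma h_lt {i m : ℕ} (him : i < m) (hm : m < p.parts.length) : SAh p m < SAh p i := by
  have := lam_anti p (le_of_lt him) hm
  have := lam_pos p hm
  simp only [SAh]
  omega

end SA

namespace SA
variable (p : CorePartition)

lemma exists_hook {i s : ℕ} (hi : i < p.parts.length) (hs : 0 < s) (hle : s ≤ SAh p i)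
    (hnot : ∀ m, m < p.parts.length → SAh p m ≠ SAh p i - s) :
    ∃ j, j < p.parts.getD i 0 ∧ p.hook i j = s := by
  classical
  have hlip : 0 < p.parts.getD i 0 := lam_pos p hi
  set k := p.parts.length with hk
  set li := p.parts.getD i 0 with hli
  set B' : Finset ℕ := (Finset.Ico (i+1) k).image (SAh p) with hB'
  set T : Finset ℕ := (Finset.range (SAh p i)) \ B' with hT
  have hB'sub : B' ⊆ Finset.range (SAh p i) := by
    intro c hc
    simp only [hB', Finset.mem_image, Finset.mem_Ico] at hc
    obtain ⟨m, ⟨hm1, hm2⟩, rfl⟩ := hc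
    exact Finset.mem_range.mpr (h_lt p (by omega) hm2)
  have hB'card : B'.card = k - (i+1) := by
    rw [hB', Finset.card_image_of_injOn, Nat.card_Ico]
    intro a ha b hb he
    simp only [Finset.coe_Ico, Set.mem_Ico] at ha hb
    by_contra hne
    rcases lt_or_gt_of_ne hne with h | h
    · exact absurd he (Nat.ne_of_gt (h_lt p h hb.2))
    · exact absurd he (Nat.ne_of_lt (h_lt p h ha.2))
  have hTcard : T.card = li := by
    rw [hT, Finset.card_sdiff_of_subset hB'sub, Finset.card_range, hB'card]
    simp only [SAh, ← hk, ← hli]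
    omega
  have hsurj := Finset.surj_on_of_inj_on_of_card_le
    (s := Finset.range li) (t := T)
    (fun j _ => j + (k - p.conj j))
    (fun j hj => by
      simp only [Finset.mem_range] at hj
      have h1 := conj_lower p (j := j) hi (by omega)
      have h2 := conj_le p j
      rw [hT, Finset.mem_sdiff]
      constructor
      · simp only [Finset.mem_range, SAh, ← hk, ← hli]
        simp only [← hk] at h1 h2
        omega
      · intro hmem
        simp only [hB', Finset.mem_image, Finset.mem_Ico] at hmem
        obtain ⟨m, ⟨hm1, hm2⟩, he⟩ := hmem
        exact f_not_h p hm2 he)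
    (fun j1 j2 h1 h2 he => by
      simp only [Finset.mem_range] at h1 h2
      by_contra hne
      have hmono : ∀ a b : ℕ, a < b → a + (k - p.conj a) < b + (k - p.conj b) := by
        intro a b hab
        have := conj_anti p (le_of_lt hab)
        have := conj_le p a
        have := conj_le p b
        omega
      rcases lt_or_gt_of_ne hne with h | h
      · exact absurd he (Nat.ne_of_lt (hmono _ _ h))
      · exact absurd he (Nat.ne_of_gt (hmono _ _ h)))
    (by rw [hTcard, Finset.card_range])
  have hbT : SAh p i - s ∈ T := by
    rw [hT, Finset.mem_sdiff]
    constructor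
    · rw [Finset.mem_range]; omega
    · intro hmem
      simp only [hB', Finset.mem_image, Finset.mem_Ico] at hmem
      obtain ⟨m, ⟨hm1, hm2⟩, he⟩ := hmem
      exact hnot m hm2 he
  obtain ⟨j, hjS, hFj⟩ := hsurj _ hbT
  rw [Finset.mem_range] at hjS
  refine ⟨j, hjS, ?_⟩
  have hFj' : SAh p i - s = j + (k - p.conj j) := hFj
  have hadd := hook_add p (j := j) hi (by omega)
  simp only [← hk] at hadd
  omega

lemma isCore_iff {s : ℕ} (hs : 0 < s) :
    p.IsCore s ↔ ∀ i, i < p.parts.length → s ≤ SAh p i →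
      ∃ m, m < p.parts.length ∧ SAh p m = SAh p i - s := by
  constructor
  · intro hc i hi hle
    by_contra hno
    push_neg at hno
    obtain ⟨j, hj, hjs⟩ := exists_hook p hi hs hle hno
    exact hc i j hi hj hjs
  · intro hcond i j hi hj he
    have hadd := hook_add p hi hj
    have hle : s ≤ SAh p i := by omega
    obtain ⟨m, hm, hbm⟩ := hcond i hi hle
    exact f_not_h p (j := j) hm (by omega)

end SA


/-- the set of first-column hook lengths -/
def SAbeta (p : CorePartition) : Set ℕ := {c | ∃ i, i < p.parts.length ∧ SAh p i = c}

namespace SA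
variable (p : CorePartition)

def betaList (p : CorePartition) : List ℕ := (List.range p.parts.length).map (SAh p)

lemma mem_betaList {c : ℕ} : c ∈ betaList p ↔ c ∈ SAbeta p := by
  simp [betaList, SAbeta, List.mem_map, List.mem_range]

lemma betaList_sorted : (betaList p).Pairwise (· > ·) := by
  unfold betaList
  rw [List.pairwise_map]
  apply (List.pairwise_lt_range (n := _)).imp_of_mem
  intro a b ha hb hab
  exact h_lt p hab (List.mem_range.mp hb)

lemma betaList_length : (betaList p).length = p.parts.length := by
  simp [betaList]

lemma betaList_getElem {i : ℕ} (h : i < (betaList p).length) : (betaList p)[i] = SAh p i := by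
  simp [betaList]

instance : IsAntisymm ℕ (· > ·) := ⟨fun a b h1 h2 => absurd h1 (lt_asymm h2)⟩
instance : IsIrrefl ℕ (· > ·) := ⟨fun a h => lt_irrefl a h⟩

lemma beta_inj {p q : CorePartition} (h : SAbeta p = SAbeta q) : p = q := by
  have he : betaList p = betaList q := by
    apply List.Perm.eq_of_pairwise' (betaList_sorted p) (betaList_sorted q)
    rw [List.perm_ext_iff_of_nodup (betaList_sorted p).nodup (betaList_sorted q).nodup]
    intro a
    rw [mem_betaList, mem_betaList, h]
  have hlen : p.parts.length = q.parts.length := by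
    have := congrArg List.length he
    rwa [betaList_length, betaList_length] at this
  have hparts : p.parts = q.parts := by
    apply List.ext_getElem hlen
    intro i h1 h2
    have hbe : SAh p i = SAh q i := by
      have h3 : i < (betaList p).length := by rwa [betaList_length]
      have := congrArg (fun l => l.getD i 0) he
      simp only [List.getD_eq_getElem _ _ h3,
        List.getD_eq_getElem _ _ (by rwa [betaList_length] : i < (betaList q).length)] at this
      rwa [betaList_getElem, betaList_getElem] at this
    simp only [SAh, lam_getElem p h1, lam_getElem q h2, hlen] at hbe
    omega
  obtain ⟨lp, sp, pp⟩ := p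
  obtain ⟨lq, sq, pq⟩ := q
  simp only at hparts
  subst hparts
  rfl

lemma beta_pos {c : ℕ} (hc : c ∈ SAbeta p) : 0 < c := by
  obtain ⟨i, hi, rfl⟩ := hc
  have := lam_pos p hi
  simp only [SAh]
  omega

lemma sub_mem {s c : ℕ} (hcore : p.IsCore s) (hs : 0 < s) (hc : c ∈ SAbeta p) (hle : s ≤ c) :
    c - s ∈ SAbeta p := by
  obtain ⟨i, hi, rfl⟩ := hc
  obtain ⟨m, hm, he⟩ := (isCore_iff p hs).mp hcore i hi hle
  exact ⟨m, hm, he⟩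

lemma sub_mul_mem {s c : ℕ} (hcore : p.IsCore s) (hs : 0 < s) (a : ℕ) (hc : c ∈ SAbeta p)
    (hle : a * s ≤ c) : c - a * s ∈ SAbeta p := by
  induction a with
  | zero => simpa using hc
  | succ a ih =>
    have h1 : (a + 1) * s = a * s + s := by ring
    have h2 : a * s ≤ c := by omega
    have h3 := ih h2
    have h4 : c - (a + 1) * s = (c - a * s) - s := by omega
    rw [h4]
    exact sub_mem p hcore hs h3 (by omega)

lemma beta_sub_poset {s t : ℕ} (hs : 0 < s) (ht : 0 < t)
    (hcs : p.IsCore s) (hct : p.IsCore t) : SAbeta p ⊆ PosetElems s t := by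
  have key : ∀ ab a b c, a + b = ab → c ∈ SAbeta p → c = a * s + b * t → False := by
    intro ab
    induction ab with
    | zero =>
      intro a b c hab hc he
      have := beta_pos p hc
      have ha : a = 0 := by omega
      have hb : b = 0 := by omega
      subst ha; subst hb; simp at he; omega
    | succ ab ih =>
      intro a b c hab hc he
      rcases Nat.eq_zero_or_pos a with rfl | ha
      · have hb : 0 < b := by omega
        have h1 : t ≤ c := by
          rw [he]; simp
          calc t = 1 * t := (one_mul t).symm
          _ ≤ b * t := Nat.mul_le_mul_right t hb
        have h2 := sub_mem p hct ht hc h1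
        apply ih 0 (b - 1) (c - t) (by omega) h2
        have : (b - 1) * t = b * t - t := by
          cases b with
          | zero => omega
          | succ b => simp [Nat.succ_mul]
        simp at he ⊢
        omega
      · have h1 : s ≤ c := by
          rw [he]
          calc s = 1 * s := (one_mul s).symm
          _ ≤ a * s := Nat.mul_le_mul_right s ha
          _ ≤ a * s + b * t := Nat.le_add_right _ _
        have h2 := sub_mem p hcs hs hc h1
        apply ih (a - 1) b (c - s) (by omega) h2
        have h3 : (a - 1) * s = a * s - s := by
          cases a with
          | zero => omega
          | succ a => simp [Nat.succ_mul]
        have h4 : s ≤ a * s := by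
          calc s = 1 * s := (one_mul s).symm
          _ ≤ a * s := Nat.mul_le_mul_right s ha
        omega
  intro c hc ⟨a, b, he⟩
  exact key (a + b) a b c rfl hc he

lemma beta_ideal_closed {s t : ℕ} (hs : 0 < s) (ht : 0 < t)
    (hcs : p.IsCore s) (hct : p.IsCore t) :
    ∀ ⦃c d : ℕ⦄, c ∈ PosetElems s t → d ∈ SAbeta p → PosetLe s t c d → c ∈ SAbeta p := by
  rintro c d _ hd ⟨a, b, he⟩
  have h1 : a * s ≤ d := by omega
  have h2 := sub_mul_mem p hcs hs a hd h1
  have h3 : b * t ≤ d - a * s := by omega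
  have h4 := sub_mul_mem p hct ht b h2 h3
  have h5 : d - a * s - b * t = c := by omega
  rwa [h5] at h4

lemma beta_nocons (hd : p.Distinct) : ∀ a : ℕ, ¬(a ∈ SAbeta p ∧ a + 1 ∈ SAbeta p) := by
  rintro a ⟨⟨m, hm, hem⟩, ⟨i, hi, hei⟩⟩
  rcases lt_trichotomy i m with h | h | h
  · have hlam : p.parts.getD m 0 < p.parts.getD i 0 := by
      rw [lam_getElem p hm, lam_getElem p hi]
      exact List.pairwise_iff_getElem.mp hd i m _ _ h
    simp only [SAh] at hem hei
    omega
  · subst h; omega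
  · have := h_lt p h hi
    omega

end SA

namespace SA

lemma mem_iff_getD {L : List ℕ} {c : ℕ} : c ∈ L ↔ ∃ i, i < L.length ∧ L.getD i 0 = c := by
  rw [List.mem_iff_getElem]
  constructor
  · rintro ⟨i, h, e⟩; exact ⟨i, h, by rwa [List.getD_eq_getElem _ _ h]⟩
  · rintro ⟨i, h, e⟩; exact ⟨i, h, by rwa [List.getD_eq_getElem _ _ h] at e⟩

lemma sorted_step {L : List ℕ} (h : L.Pairwise (· > ·))
    (hc : ∀ a : ℕ, a ∈ L → a + 1 ∈ L → False) :
    ∀ d i, i + d < L.length → L.getD (i + d) 0 + 2 * d ≤ L.getD i 0 := by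
  intro d
  induction d with
  | zero => intro i hi; simp
  | succ d ih =>
    intro i hi
    have h1 := ih i (by omega)
    have h2 : L.getD (i + d + 1) 0 < L.getD (i + d) 0 := by
      rw [List.getD_eq_getElem _ _ (by omega : i + d + 1 < L.length),
          List.getD_eq_getElem _ _ (by omega : i + d < L.length)]
      exact List.pairwise_iff_getElem.mp h (i + d) (i + d + 1) (by omega) (by omega) (by omega)
    have h3 : L.getD (i + d) 0 ≠ L.getD (i + d + 1) 0 + 1 := by
      intro he
      apply hc (L.getD (i + d + 1) 0)
      · exact mem_iff_getD.mpr ⟨i + d + 1, by omega, rfl⟩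
      · rw [← he]; exact mem_iff_getD.mpr ⟨i + d, by omega, rfl⟩
    have he : i + (d + 1) = i + d + 1 := rfl
    rw [he]
    omega

lemma exists_partition {s t : ℕ} (hs : 0 < s) (ht : 0 < t) (I : Set ℕ)
    (hsub : I ⊆ PosetElems s t)
    (hideal : ∀ ⦃c d : ℕ⦄, c ∈ PosetElems s t → d ∈ I → PosetLe s t c d → c ∈ I)
    (hcons : ∀ a : ℕ, ¬(a ∈ I ∧ a + 1 ∈ I))
    (L : List ℕ) (hmem : ∀ c : ℕ, c ∈ L ↔ c ∈ I) (hsortL : L.Pairwise (· > ·)) :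
    ∃ p : CorePartition, p.IsCore s ∧ p.IsCore t ∧ p.Distinct ∧ SAbeta p = I := by
  classical
  have hzero : (0 : ℕ) ∉ I := fun h0 => hsub h0 ⟨0, 0, by simp⟩
  have hconsL : ∀ a : ℕ, a ∈ L → a + 1 ∈ L → False := by
    intro a h1 h2
    exact hcons a ⟨(hmem a).mp h1, (hmem (a+1)).mp h2⟩
  set k := L.length with hk
  have hstep := sorted_step hsortL hconsL
  have hbound : ∀ i, i < k → k - i ≤ L.getD i 0 := by
    intro i h
    have h1 := hstep (k - 1 - i) i (by omega)
    have h2 : i + (k - 1 - i) = k - 1 := by omega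
    rw [h2] at h1
    have h3 : 0 < L.getD (k - 1) 0 := by
      have hmm := (hmem _).mp (mem_iff_getD.mpr ⟨k - 1, by omega, rfl⟩)
      rcases Nat.eq_zero_or_pos (L.getD (k-1) 0) with he | hp
      · rw [he] at hmm; exact absurd hmm hzero
      · exact hp
    omega
  set parts : List ℕ := L.mapIdx (fun i c => c - (k - (i + 1))) with hparts
  have hplen : parts.length = k := by simp [hparts, hk]
  have hpelem : ∀ i, i < k → parts.getD i 0 = L.getD i 0 - (k - (i + 1)) := by
    intro i h
    rw [List.getD_eq_getElem _ _ (by omega : i < parts.length),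
        List.getD_eq_getElem _ _ (by omega : i < L.length)]
    simp [hparts]
  have hpsorted : parts.Pairwise (· > ·) := by
    rw [List.pairwise_iff_getElem]
    intro a b ha hb hab
    rw [← List.getD_eq_getElem parts 0 ha, ← List.getD_eq_getElem parts 0 hb]
    rw [hplen] at ha hb
    rw [hpelem a ha, hpelem b hb]
    have h1 := hstep (b - a) a (by omega)
    have h2 : a + (b - a) = b := by omega
    rw [h2] at h1
    have h3 := hbound b hb
    omega
  have hppos : ∀ x ∈ parts, 0 < x := by
    intro x hx
    obtain ⟨i, hi, rfl⟩ := mem_iff_getD.mp hx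
    rw [hplen] at hi
    rw [hpelem i hi]
    have := hbound i hi
    omega
  refine ⟨⟨parts, hpsorted.imp le_of_lt, hppos⟩, ?_⟩
  set p : CorePartition := ⟨parts, hpsorted.imp le_of_lt, hppos⟩ with hp
  have hpp : p.parts = parts := rfl
  have hbh : ∀ i, i < k → SAh p i = L.getD i 0 := by
    intro i h
    simp only [SAh, hpp, hplen]
    rw [hpelem i h]
    have := hbound i h
    omega
  have hbeta : SAbeta p = I := by
    ext c
    constructor
    · rintro ⟨i, hi, rfl⟩
      rw [hpp, hplen] at hi
      rw [hbh i hi]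
      exact (hmem _).mp (mem_iff_getD.mpr ⟨i, hi, rfl⟩)
    · intro hc
      obtain ⟨i, hi, he⟩ := mem_iff_getD.mp ((hmem c).mpr hc)
      exact ⟨i, by rw [hpp, hplen]; exact hi, by rw [hbh i hi]; exact he⟩
  have hIsCore : ∀ u : ℕ, 0 < u →
      (∀ c : ℕ, u ≤ c → PosetLe s t (c - u) c) → p.IsCore u := by
    intro u hu hPle
    rw [isCore_iff p hu]
    intro i hi hle
    have hik : i < k := by rwa [hpp, hplen] at hi
    rw [hbh i hik] at hle ⊢
    have hLi : L.getD i 0 ∈ I := (hmem _).mp (mem_iff_getD.mpr ⟨i, hik, rfl⟩)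
    have hcP : L.getD i 0 - u ∈ PosetElems s t := by
      intro ⟨a, b, he⟩
      apply hsub hLi
      obtain ⟨a', b', he'⟩ := hPle (L.getD i 0) hle
      exact ⟨a + a', b + b', by rw [Nat.add_mul, Nat.add_mul]; omega⟩
    have hcI : L.getD i 0 - u ∈ I := hideal hcP hLi (hPle (L.getD i 0) hle)
    obtain ⟨m, hm, hem⟩ := mem_iff_getD.mp ((hmem _).mpr hcI)
    exact ⟨m, by rw [hpp, hplen]; exact hm, by rw [hbh m hm]; exact hem⟩
  refine ⟨hIsCore s hs ?_, hIsCore t ht ?_, hpsorted, hbeta⟩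
  · intro c hc
    exact ⟨1, 0, by omega⟩
  · intro c hc
    exact ⟨0, 1, by omega⟩

end SA

namespace SA

lemma poset_finite {s t : ℕ} (hco : Nat.Coprime s t) (hs : 1 < s) (ht : 1 < t) :
    (PosetElems s t).Finite := by
  apply Set.Finite.subset (Set.finite_Iio (s * t))
  intro m hm
  rw [Set.mem_Iio]
  by_contra hge
  push_neg at hge
  have hcl : m ∈ AddSubmonoid.closure ({s, t} : Set ℕ) := by
    by_contra hncl
    have h1 := (frobeniusNumber_pair hco hs ht).2 hncl
    have h2 : s + t ≤ s * t := Nat.add_le_mul hs ht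
    omega
  obtain ⟨a, b, he⟩ := (AddSubmonoid.mem_closure_pair s t m).mp hcl
  simp only [smul_eq_mul] at he
  exact hm ⟨a, b, he.symm⟩

lemma set_to_list {I : Set ℕ} (hfin : I.Finite) :
    ∃ L : List ℕ, (∀ c : ℕ, c ∈ L ↔ c ∈ I) ∧ L.Pairwise (· > ·) := by
  classical
  refine ⟨(hfin.toFinset.sort (· ≤ ·)).reverse, ?_, ?_⟩
  · intro c; simp [Set.Finite.mem_toFinset]
  · rw [List.pairwise_reverse]
    exact (Finset.sortedLT_sort _).pairwise

lemma coprime_aux (n : ℕ) : Nat.Coprime (2 * n + 1) (2 * n + 3) := by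
  have h1 : Nat.gcd (2 * n + 1) (2 * n + 3) ∣ 2 := by
    have := Nat.dvd_sub (Nat.gcd_dvd_right (2 * n + 1) (2 * n + 3))
      (Nat.gcd_dvd_left (2 * n + 1) (2 * n + 3))
    simpa using this
  have h2 := Nat.gcd_dvd_left (2 * n + 1) (2 * n + 3)
  rcases (Nat.dvd_prime Nat.prime_two).mp h1 with h | h
  · exact h
  · exfalso
    rw [h] at h2
    obtain ⟨c, hc⟩ := h2
    omega

end SA


/-- For every integer `n ≥ 1`, the number of `(2n+1, 2n+3)`-core partitions with
distinct parts equals the number of order ideals of the poset `P_{2n+1, 2n+3}`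
containing no two consecutive integers. -/
theorem straub_count_eq_ideals (n : ℕ) (hn : 1 ≤ n) :
    (D n).Finite ∧
    {I : Set ℕ | IsOrderIdeal (2 * n + 1) (2 * n + 3) I ∧
      ∀ a : ℕ, ¬(a ∈ I ∧ a + 1 ∈ I)}.Finite ∧
    (D n).ncard =
      {I : Set ℕ | IsOrderIdeal (2 * n + 1) (2 * n + 3) I ∧
        ∀ a : ℕ, ¬(a ∈ I ∧ a + 1 ∈ I)}.ncard := by
  have cop := SA.coprime_aux n
  have pf : (PosetElems (2 * n + 1) (2 * n + 3)).Finite :=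
    SA.poset_finite cop (by omega) (by omega)
  set T : Set (Set ℕ) := {I : Set ℕ | IsOrderIdeal (2 * n + 1) (2 * n + 3) I ∧
      ∀ a : ℕ, ¬(a ∈ I ∧ a + 1 ∈ I)} with hT
  have hTfin : T.Finite := Set.Finite.subset pf.finite_subsets (fun I hI => hI.1.1)
  have himg : SAbeta '' (D n) = T := by
    apply Set.Subset.antisymm
    · rintro _ ⟨p, hp, rfl⟩
      obtain ⟨hcs, hct, hdist⟩ := hp
      exact ⟨⟨SA.beta_sub_poset p (by omega) (by omega) hcs hct,
        SA.beta_ideal_closed p (by omega) (by omega) hcs hct⟩, SA.beta_nocons p hdist⟩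
    · intro I hI
      have hfin : I.Finite := pf.subset hI.1.1
      obtain ⟨L, hmem, hsort⟩ := SA.set_to_list hfin
      obtain ⟨p, h1, h2, h3, h4⟩ := SA.exists_partition (by omega) (by omega) I
        hI.1.1 hI.1.2 hI.2 L hmem hsort
      exact ⟨p, ⟨h1, h2, h3⟩, h4⟩
  have hinj : Set.InjOn SAbeta (D n) := fun p _ q _ h => SA.beta_inj h
  have hDfin : (D n).Finite := Set.Finite.of_finite_image (himg ▸ hTfin) hinj
  refine ⟨hDfin, hTfin, ?_⟩
  rw [← himg, Set.ncard_image_of_injOn hinj]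
end

section
/- For coprime positive integers s and t, there is a bijection between the set of (s,t)-core partitions and the set of order ideals of the poset P_{s,t}; under this bijection, if λ corresponds to the order ideal I and |I| = k, then size(λ) = (Σ_{a ∈ I} a) − k(k−1)/2. Consequently, the generating polynomial Σ_λ q^{size(λ)} over (s,t)-core partitions λ is obtained from Σ_I q^{Σ_{a∈I} a} t^{|I|} (over order ideals I of P_{s,t}) by replacing each power t^k with q^{−k(k−1)/2}. -/
namespace CorePartition

/-- first-column hook lengths (beta-set entries), 0-indexed. -/
def hh (p : CorePartition) (i : ℕ) : ℕ := p.parts.getD i 0 + (p.parts.length - 1 - i)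

def betaF (p : CorePartition) : Finset ℕ := (Finset.range p.parts.length).image p.hh

variable (p : CorePartition)

lemma getD_eq (i : ℕ) (hi : i < p.parts.length) : p.parts.getD i 0 = p.parts[i] :=
  List.getD_eq_getElem _ _ hi

lemma part_pos {i : ℕ} (hi : i < p.parts.length) : 1 ≤ p.parts.getD i 0 := by
  rw [p.getD_eq i hi]
  exact p.pos _ (List.getElem_mem hi)

lemma part_mono {i j : ℕ} (hij : i ≤ j) (hj : j < p.parts.length) :
    p.parts.getD j 0 ≤ p.parts.getD i 0 := by
  have hi : i < p.parts.length := lt_of_le_of_lt hij hj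
  rw [p.getD_eq i hi, p.getD_eq j hj]
  exact p.sorted.rel_get_of_le (a := ⟨i, hi⟩) (b := ⟨j, hj⟩) hij

lemma conj_le (j : ℕ) : p.conj j ≤ p.parts.length := List.length_filter_le _ _

lemma lt_conj_iff {i : ℕ} (hi : i < p.parts.length) (j : ℕ) :
    j < p.parts.getD i 0 ↔ i < p.conj j := by
  constructor
  · intro h
    have hsplit : p.conj j
        = ((p.parts.take (i+1)).filter (fun x => j < x)).length
          + ((p.parts.drop (i+1)).filter (fun x => j < x)).length := by
      rw [conj, ← List.length_append, ← List.filter_append, List.take_append_drop]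
    have h1 : (p.parts.take (i+1)).filter (fun x => j < x) = p.parts.take (i+1) := by
      rw [List.filter_eq_self]
      intro a ha
      obtain ⟨m, hm, rfl⟩ := List.mem_iff_getElem.1 ha
      rw [List.getElem_take]
      have hmlen : m < p.parts.length := by
        have := hm; simp [List.length_take] at this; omega
      have hmi : m ≤ i := by
        have := hm; simp [List.length_take] at this; omega
      have h4 := p.part_mono hmi hi
      rw [p.getD_eq m hmlen] at h4
      simp only [decide_eq_true_eq]
      omega
    have h2 : (p.parts.take (i+1)).length = i + 1 := by
      simp [List.length_take]; omega
    rw [h1, h2] at hsplit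
    omega
  · intro h
    by_contra hcon
    push_neg at hcon
    have hsplit : p.conj j
        = ((p.parts.take i).filter (fun x => j < x)).length
          + ((p.parts.drop i).filter (fun x => j < x)).length := by
      rw [conj, ← List.length_append, ← List.filter_append, List.take_append_drop]
    have h1 : (p.parts.drop i).filter (fun x => j < x) = [] := by
      rw [List.filter_eq_nil_iff]
      intro a ha
      obtain ⟨m, hm, rfl⟩ := List.mem_iff_getElem.1 ha
      rw [List.getElem_drop]
      have hmlen : i + m < p.parts.length := by
        have := hm; simp [List.length_drop] at this; omega
      have h4 := p.part_mono (Nat.le_add_right i m) hmlen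
      rw [p.getD_eq _ hmlen] at h4
      simp only [decide_eq_true_eq]
      omega
    have h2 : ((p.parts.take i).filter (fun x => j < x)).length ≤ i := by
      calc _ ≤ (p.parts.take i).length := List.length_filter_le _ _
        _ ≤ i := by simp [List.length_take]
    rw [h1] at hsplit
    simp only [List.length_nil] at hsplit
    omega

lemma conj_zero : p.conj 0 = p.parts.length := by
  rw [conj]
  have : p.parts.filter (fun x => 0 < x) = p.parts := by
    rw [List.filter_eq_self]
    intro a ha
    simp only [decide_eq_true_eq]
    exact p.pos a ha
  rw [this]

lemma hh_strict {i j : ℕ} (hij : i < j) (hj : j < p.parts.length) : p.hh j < p.hh i := by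
  have h1 := p.part_mono hij.le hj
  unfold hh
  omega

lemma hh_pos {i : ℕ} (hi : i < p.parts.length) : 1 ≤ p.hh i := by
  have := p.part_pos hi
  unfold hh
  omega

lemma mem_betaF {x : ℕ} : x ∈ p.betaF ↔ ∃ i, i < p.parts.length ∧ p.hh i = x := by
  simp [betaF]

lemma card_betaF : p.betaF.card = p.parts.length := by
  rw [betaF, Finset.card_image_of_injOn, Finset.card_range]
  intro i hi j hj hij
  simp only [Finset.coe_range, Set.mem_Iio] at hi hj
  by_contra hne
  rcases Nat.lt_or_ge i j with h | h
  · exact absurd hij (p.hh_strict h hj).ne'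
  · exact absurd hij (p.hh_strict (by omega) hi).ne

/-- the cofunction enumerating the complement of the beta set -/
def xf (p : CorePartition) (j : ℕ) : ℕ := j + (p.parts.length - p.conj j)

lemma hook_add_xf {i j : ℕ} (hi : i < p.parts.length) (hj : j < p.parts.getD i 0) :
    p.hook i j + p.xf j = p.hh i ∧ p.xf j < p.hh i := by
  have h1 : i < p.conj j := (p.lt_conj_iff hi j).1 hj
  have h2 : p.conj j ≤ p.parts.length := p.conj_le j
  unfold hook hh xf
  omega

lemma xf_ne_hh {m : ℕ} (hm : m < p.parts.length) (j : ℕ) : p.hh m ≠ p.xf j := by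
  have h2 : p.conj j ≤ p.parts.length := p.conj_le j
  rcases Nat.lt_or_ge m (p.conj j) with hc | hc
  · have h3 : j < p.parts.getD m 0 := (p.lt_conj_iff hm j).2 hc
    unfold hh xf
    omega
  · have h3 : ¬ j < p.parts.getD m 0 := fun h => absurd ((p.lt_conj_iff hm j).1 h) (by omega)
    unfold hh xf
    omega

end CorePartition
namespace CorePartition

variable (p : CorePartition)

lemma xf_surj (x : ℕ) (hx : ∀ m, m < p.parts.length → p.hh m ≠ x) :
    ∃ j, p.xf j = x ∧ ∀ i, i < p.parts.length → x < p.hh i → j < p.parts.getD i 0 := by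
  classical
  set n := p.parts.length with hn
  set c := ((Finset.range n).filter (fun m => x < p.hh m)).card with hcdef
  -- characterization : for m < n, x < hh m ↔ m < c
  have hc1 : ∀ m, m < n → (x < p.hh m ↔ m < c) := by
    intro m hm
    constructor
    · intro h
      have hsub : Finset.range (m+1) ⊆ (Finset.range n).filter (fun m => x < p.hh m) := by
        intro a ha
        simp only [Finset.mem_range] at ha
        simp only [Finset.mem_filter, Finset.mem_range]
        have ham : a ≤ m := by omega
        have : p.hh m ≤ p.hh a := by
          rcases Nat.lt_or_ge a m with h' | h'
          · exact (p.hh_strict h' hm).le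
          · have : a = m := by omega
            simp [this]
        constructor
        · omega
        · omega
      have := Finset.card_le_card hsub
      simp only [Finset.card_range] at this
      omega
    · intro h
      by_contra hcon
      push_neg at hcon
      have hlt : p.hh m < x := lt_of_le_of_ne hcon (hx m hm)
      have hsub : (Finset.range n).filter (fun m => x < p.hh m) ⊆ Finset.range m := by
        intro a ha
        simp only [Finset.mem_filter, Finset.mem_range] at ha
        simp only [Finset.mem_range]
        by_contra hma
        push_neg at hma
        have : p.hh a ≤ p.hh m := by
          rcases Nat.lt_or_ge m a with h' | h'
          · exact (p.hh_strict h' ha.1).le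
          · have : a = m := by omega
            simp [this]
        omega
      have := Finset.card_le_card hsub
      simp only [Finset.card_range] at this
      omega
  have hc2 : c ≤ n := by
    calc c ≤ (Finset.range n).card := Finset.card_filter_le _ _
      _ = n := Finset.card_range n
  have hc3 : n - c ≤ x := by
    have hinj : Set.InjOn p.hh ((Finset.range n).filter (fun m => ¬ x < p.hh m)) := by
      intro a ha b hb hab
      simp only [Finset.coe_filter, Set.mem_setOf_eq, Finset.mem_range] at ha hb
      by_contra hne
      rcases Nat.lt_or_ge a b with h' | h'
      · exact absurd hab (p.hh_strict h' hb.1).ne'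
      · exact absurd hab (p.hh_strict (by omega) ha.1).ne
    have hmaps : ∀ m ∈ (Finset.range n).filter (fun m => ¬ x < p.hh m),
        p.hh m ∈ Finset.range x := by
      intro m hm
      simp only [Finset.mem_filter, Finset.mem_range] at hm
      simp only [Finset.mem_range]
      exact lt_of_le_of_ne (by omega) (hx m hm.1)
    have hcard := Finset.card_le_card_of_injOn p.hh hmaps hinj
    have hsplit := Finset.card_filter_add_card_filter_not
      (s := Finset.range n) (fun m => x < p.hh m)
    simp only [Finset.card_range] at hsplit hcard
    omega
  have hA : ∀ m, m < n → m < c → x - (n - c) < p.parts.getD m 0 := by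
    intro m hm hmc
    have hc1' : c - 1 < n := by omega
    have hhc : x < p.hh (c-1) := (hc1 (c-1) hc1').2 (by omega)
    have hmono := p.part_mono (show m ≤ c - 1 by omega) hc1'
    have : p.hh (c-1) = p.parts.getD (c-1) 0 + (n - 1 - (c-1)) := rfl
    omega
  have hB : ∀ m, m < n → c ≤ m → p.parts.getD m 0 ≤ x - (n - c) := by
    intro m hm hcm
    have hcn : c < n := by omega
    have hhc : p.hh c < x :=
      lt_of_le_of_ne (by have := (hc1 c hcn).1; omega) (hx c hcn)
    have hmono := p.part_mono hcm hm
    have : p.hh c = p.parts.getD c 0 + (n - 1 - c) := rfl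
    omega
  refine ⟨x - (n - c), ?_, ?_⟩
  · -- xf j = x ; first show conj j = c
    have hconj : p.conj (x - (n - c)) = c := by
      rcases lt_trichotomy (p.conj (x - (n - c))) c with h | h | h
      · have hlt : p.conj (x - (n-c)) < n := by omega
        have := (p.lt_conj_iff hlt (x - (n-c))).1 (hA _ hlt (by omega))
        omega
      · exact h
      · have hcn : c < n := lt_of_lt_of_le h (p.conj_le _)
        have := (p.lt_conj_iff hcn (x - (n-c))).2 h
        have := hB c hcn le_rfl
        omega
    show x - (n - c) + (n - p.conj (x - (n-c))) = x
    rw [hconj]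
    omega
  · intro i hi hhi
    exact hA i hi ((hc1 i hi).1 hhi)

end CorePartition
namespace CorePartition

variable (p : CorePartition)

lemma isCore_iff {s : ℕ} (hs : 0 < s) :
    p.IsCore s ↔ ∀ x ∈ p.betaF, s ≤ x → x - s ∈ p.betaF := by
  constructor
  · intro hcore x hxmem hsx
    obtain ⟨i, hi, rfl⟩ := p.mem_betaF.1 hxmem
    by_contra hno
    rw [p.mem_betaF] at hno
    push_neg at hno
    obtain ⟨j, hj1, hj2⟩ := p.xf_surj (p.hh i - s) (fun m hm => hno m hm)
    have hji : j < p.parts.getD i 0 := hj2 i hi (by omega)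
    obtain ⟨he, hlt⟩ := p.hook_add_xf hi hji
    exact hcore i j hi hji (by omega)
  · intro hcl i j hi hj hhook
    obtain ⟨he, hlt⟩ := p.hook_add_xf hi hj
    have hmem : p.hh i ∈ p.betaF := p.mem_betaF.2 ⟨i, hi, rfl⟩
    have hsub := hcl _ hmem (show s ≤ p.hh i by omega)
    obtain ⟨m, hm, hme⟩ := p.mem_betaF.1 hsub
    have : p.hh i - s = p.xf j := by omega
    rw [this] at hme
    exact p.xf_ne_hh hm j hme

lemma betaF_not_rep {s t : ℕ} (hs : 0 < s) (ht : 0 < t)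
    (hcs : p.IsCore s) (hct : p.IsCore t) :
    ∀ x ∈ p.betaF, ¬ ∃ a b : ℕ, x = a * s + b * t := by
  intro x
  induction x using Nat.strong_induction_on with
  | _ x ih =>
    rintro hx ⟨a, b, hab⟩
    obtain ⟨i, hi, hie⟩ := p.mem_betaF.1 hx
    have hx1 : 1 ≤ x := hie ▸ p.hh_pos hi
    rcases Nat.eq_zero_or_pos a with rfl | ha
    · rcases Nat.eq_zero_or_pos b with rfl | hb
      · simp at hab; omega
      · have hts : t ≤ b * t := Nat.le_mul_of_pos_left t hb
        have hxt : t ≤ x := by omega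
        have hmem : x - t ∈ p.betaF := (p.isCore_iff ht).1 hct x hx hxt
        refine ih (x - t) (by omega) hmem ⟨0, b - 1, ?_⟩
        have : (b - 1) * t = b * t - t := by rw [Nat.sub_one_mul]
        omega
    · have hss : s ≤ a * s := Nat.le_mul_of_pos_left s ha
      have hxs : s ≤ x := by omega
      have hmem : x - s ∈ p.betaF := (p.isCore_iff hs).1 hcs x hx hxs
      refine ih (x - s) (by omega) hmem ⟨a - 1, b, ?_⟩
      have : (a - 1) * s = a * s - s := by rw [Nat.sub_one_mul]
      omega

lemma betaF_closed {s t : ℕ} (hs : 0 < s) (ht : 0 < t)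
    (hcs : p.IsCore s) (hct : p.IsCore t) :
    ∀ N a b c, a + b ≤ N → ∀ d, d ∈ p.betaF → d = c + a * s + b * t → c ∈ p.betaF := by
  intro N
  induction N with
  | zero =>
    intro a b c hab d hd hde
    have : a = 0 ∧ b = 0 := by omega
    obtain ⟨rfl, rfl⟩ := this
    simp at hde
    rwa [← hde]
  | succ N ihN =>
    intro a b c hab d hd hde
    rcases Nat.eq_zero_or_pos a with rfl | ha
    · rcases Nat.eq_zero_or_pos b with rfl | hb
      · simp at hde
        rwa [← hde]
      · have hts : t ≤ b * t := Nat.le_mul_of_pos_left t hb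
        have hdt : t ≤ d := by omega
        have hmem : d - t ∈ p.betaF := (p.isCore_iff ht).1 hct d hd hdt
        refine ihN 0 (b - 1) c (by omega) (d - t) hmem ?_
        have : (b - 1) * t = b * t - t := by rw [Nat.sub_one_mul]
        omega
    · have hss : s ≤ a * s := Nat.le_mul_of_pos_left s ha
      have hds : s ≤ d := by omega
      have hmem : d - s ∈ p.betaF := (p.isCore_iff hs).1 hcs d hd hds
      refine ihN (a - 1) b c (by omega) (d - s) hmem ?_
      have : (a - 1) * s = a * s - s := by rw [Nat.sub_one_mul]
      omega

lemma cores_iff_ideal {s t : ℕ} (hs : 0 < s) (ht : 0 < t) :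
    (p.IsCore s ∧ p.IsCore t) ↔ IsOrderIdeal s t ↑p.betaF := by
  constructor
  · rintro ⟨hcs, hct⟩
    constructor
    · intro x hx
      exact p.betaF_not_rep hs ht hcs hct x hx
    · rintro c d hc hd ⟨a, b, hde⟩
      have := p.betaF_closed hs ht hcs hct (a + b) a b c le_rfl d hd hde
      exact this
  · rintro ⟨hsub, hclose⟩
    have key : ∀ u : ℕ, 0 < u → (∀ a b : ℕ, u ≠ a * s + b * t) →
        p.IsCore u → True := fun _ _ _ _ => trivial
    constructor
    · rw [p.isCore_iff hs]
      intro x hx hsx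
      have hxp : x ∈ PosetElems s t := hsub hx
      have hxsp : x - s ∈ PosetElems s t := by
        rintro ⟨a, b, hab⟩
        refine hxp ⟨a + 1, b, ?_⟩
        have : (a + 1) * s = a * s + s := by rw [Nat.add_one_mul]
        omega
      have := hclose hxsp hx ⟨1, 0, by simp; omega⟩
      exact this
    · rw [p.isCore_iff ht]
      intro x hx htx
      have hxp : x ∈ PosetElems s t := hsub hx
      have hxtp : x - t ∈ PosetElems s t := by
        rintro ⟨a, b, hab⟩
        refine hxp ⟨a, b + 1, ?_⟩
        have : (b + 1) * t = b * t + t := by rw [Nat.add_one_mul]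
        omega
      have := hclose hxtp hx ⟨0, 1, by simp; omega⟩
      exact this

end CorePartition
namespace CorePartition

lemma exists_partition (F : Finset ℕ) (hpos : ∀ x ∈ F, 0 < x) :
    ∃ p : CorePartition, p.betaF = F := by
  classical
  set m := F.card with hm
  set e : Fin m → ℕ := fun i => F.orderEmbOfFin rfl i with he
  set ee : ℕ → ℕ := fun n => if h : n < m then e ⟨n, h⟩ else 0 with hee
  have ee_mem : ∀ n, n < m → ee n ∈ F := by
    intro n hn
    simp only [hee, dif_pos hn]
    exact Finset.orderEmbOfFin_mem F rfl _
  have ee_strict : ∀ a b, a < b → b < m → ee a < ee b := by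
    intro a b hab hb
    simp only [hee, dif_pos hb, dif_pos (lt_trans hab hb)]
    exact (F.orderEmbOfFin rfl).strictMono (by exact hab)
  have ee_lb : ∀ n, n < m → n + 1 ≤ ee n := by
    intro n
    induction n with
    | zero => intro h; exact hpos _ (ee_mem 0 h)
    | succ k ih =>
      intro h
      have h1 := ih (by omega)
      have h2 := ee_strict k (k+1) (by omega) h
      omega
  have ee_gap : ∀ a b, a ≤ b → b < m → ee a + (b - a) ≤ ee b := by
    intro a b hab
    induction b with
    | zero =>
      intro _
      have : a = 0 := by omega
      simp [this]
    | succ k ih =>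
      intro hk
      rcases Nat.lt_or_ge a (k+1) with h' | h'
      · have h1 := ih (by omega) (by omega)
        have h2 := ee_strict k (k+1) (by omega) hk
        omega
      · have : a = k + 1 := by omega
        simp [this]
  have ee_surj : ∀ x ∈ F, ∃ n, n < m ∧ ee n = x := by
    intro x hx
    have hr := Finset.range_orderEmbOfFin F (k := m) rfl
    have hx' : x ∈ Set.range (F.orderEmbOfFin rfl) := by rw [hr]; exact hx
    obtain ⟨i, hi⟩ := hx'
    exact ⟨i, i.isLt, by simp [hee, dif_pos i.isLt, he, hi]; exact fun h => absurd h (not_le.2 i.isLt)⟩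
  set L : List ℕ := List.ofFn (fun i : Fin m => ee (m - 1 - i) - (m - 1 - (i : ℕ))) with hL
  have hsort : L.Pairwise (· ≥ ·) := by
    rw [hL, List.pairwise_ofFn]
    intro i j hij
    have h1 : ee (m - 1 - j) + ((m - 1 - i) - (m - 1 - j)) ≤ ee (m - 1 - i) := by
      refine ee_gap _ _ (by omega) (by have := i.isLt; omega)
    have h2 := ee_lb (m - 1 - j) (by have := j.isLt; omega)
    have hj := j.isLt
    have hi := i.isLt
    have hij' : (i : ℕ) < (j : ℕ) := hij
    simp only [ge_iff_le]
    omega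
  have hposL : ∀ x ∈ L, 0 < x := by
    intro x hx
    rw [hL, List.mem_ofFn] at hx
    obtain ⟨i, rfl⟩ := hx
    have h2 := ee_lb (m - 1 - i) (by have := i.isLt; omega)
    show 0 < ee (m - 1 - (i:ℕ)) - (m - 1 - (i:ℕ))
    omega
  set P : CorePartition := ⟨L, hsort, hposL⟩ with hP
  have hlen : P.parts.length = m := by simp [hP, hL]
  have hgd : ∀ i, i < m → P.parts.getD i 0 = ee (m - 1 - i) - (m - 1 - i) := by
    intro i hi
    show L.getD i 0 = _
    rw [hL, List.getD_eq_getElem _ _ (by simpa using hi), List.getElem_ofFn]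
  have hhhP : ∀ i, i < m → P.hh i = ee (m - 1 - i) := by
    intro i hi
    have h2 := ee_lb (m - 1 - i) (by omega)
    unfold hh
    rw [hgd i hi, hlen]
    omega
  refine ⟨P, ?_⟩
  ext x
  rw [mem_betaF, hlen]
  constructor
  · rintro ⟨i, hi, rfl⟩
    rw [hhhP i hi]
    exact ee_mem _ (by omega)
  · intro hx
    obtain ⟨n, hn, hne⟩ := ee_surj x hx
    refine ⟨m - 1 - n, by omega, ?_⟩
    rw [hhhP _ (by omega), show m - 1 - (m - 1 - n) = n by omega, hne]

lemma betaF_inj : Function.Injective betaF := by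
  intro p q h
  have hcard : p.parts.length = q.parts.length := by
    rw [← p.card_betaF, ← q.card_betaF, h]
  set k := p.parts.length with hk
  have hhh : ∀ i, i < k → p.hh i = q.hh i := by
    have hf : ∀ x : Fin k, p.hh (k - 1 - (x:ℕ)) ∈ p.betaF :=
      fun x => p.mem_betaF.2 ⟨k - 1 - x, by have := x.isLt; omega, rfl⟩
    have hg : ∀ x : Fin k, q.hh (k - 1 - (x:ℕ)) ∈ p.betaF := by
      intro x
      rw [h]
      exact q.mem_betaF.2 ⟨k - 1 - x, by have := x.isLt; omega, rfl⟩
    have hfm : StrictMono (fun x : Fin k => p.hh (k - 1 - (x:ℕ))) := by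
      intro a b hab
      have hb := b.isLt
      exact p.hh_strict (by have := a.isLt; have : (a:ℕ) < (b:ℕ) := hab; omega) (by omega)
    have hgm : StrictMono (fun x : Fin k => q.hh (k - 1 - (x:ℕ))) := by
      intro a b hab
      have hb := b.isLt
      refine q.hh_strict (by have := a.isLt; have : (a:ℕ) < (b:ℕ) := hab; omega) (by omega)
    have h1 := Finset.orderEmbOfFin_unique (s := p.betaF) (p.card_betaF.trans hk.symm) hf hfm
    have h2 := Finset.orderEmbOfFin_unique (s := p.betaF)
      (p.card_betaF.trans hk.symm) hg hgm
    intro i hi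
    have := congrFun (h1.trans h2.symm) ⟨k - 1 - i, by omega⟩
    simpa [show k - 1 - (k - 1 - i) = i by omega] using this
  have hparts : p.parts = q.parts := by
    apply List.ext_getElem (by omega)
    intro i h1 h2
    have h3 := hhh i h1
    have e1 : p.hh i = p.parts[i] + (k - 1 - i) := by
      unfold hh; rw [p.getD_eq i h1]
    have e2 : q.hh i = q.parts[i] + (k - 1 - i) := by
      unfold hh; rw [q.getD_eq i h2, ← hcard]
    omega
  cases p; cases q
  simp only at hparts
  subst hparts
  rfl

end CorePartition
lemma rep_of_large {s t : ℕ} (hs : 0 < s) (ht : 0 < t) (hst : Nat.Coprime s t)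
    {n : ℕ} (hn : s * t ≤ n) : ∃ a b : ℕ, n = a * s + b * t := by
  haveI : NeZero t := ⟨ht.ne'⟩
  have hgen : ∀ u : ℕ, u < t → u * s ≤ n := by
    intro u hu
    have h1 : u * s ≤ (t - 1) * s := Nat.mul_le_mul_right s (by omega)
    have h2 : (t - 1) * s ≤ t * s := Nat.mul_le_mul_right s (by omega)
    have h3 : t * s = s * t := Nat.mul_comm t s
    omega
  have hmain : ∃ u, u < t ∧ u * s ≤ n ∧ t ∣ n - u * s := by
    refine ⟨((n : ZMod t) * (s : ZMod t)⁻¹).val, ZMod.val_lt _, hgen _ (ZMod.val_lt _), ?_⟩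
    have hunit : (s : ZMod t)⁻¹ * (s : ZMod t) = 1 := by
      rw [mul_comm]
      apply ZMod.mul_inv_of_unit
      exact (ZMod.isUnit_iff_coprime s t).2 hst
    have hcast : ((n - ((n : ZMod t) * (s : ZMod t)⁻¹).val * s : ℕ) : ZMod t) = 0 := by
      push_cast [Nat.cast_sub (hgen _ (ZMod.val_lt _))]
      rw [ZMod.natCast_val, ZMod.cast_id]
      linear_combination (-(n : ZMod t)) * hunit
    exact (ZMod.natCast_eq_zero_iff _ _).1 hcast
  obtain ⟨u, hut, hus, b, hb⟩ := hmain
  refine ⟨u, b, ?_⟩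
  have := Nat.mul_comm t b
  omega

lemma posetElems_finite {s t : ℕ} (hs : 0 < s) (ht : 0 < t) (hst : Nat.Coprime s t) :
    (PosetElems s t).Finite := by
  apply Set.Finite.subset (Set.finite_Iio (s * t))
  intro n hn
  simp only [Set.mem_Iio]
  by_contra hc
  push_neg at hc
  exact hn (rep_of_large hs ht hst hc)

namespace CorePartition

lemma size_add_eq_sum (p : CorePartition) :
    p.size + p.betaF.card * (p.betaF.card - 1) / 2 = ∑ x ∈ p.betaF, x := by
  classical
  have h1 : ∑ x ∈ p.betaF, x = ∑ i ∈ Finset.range p.parts.length, p.hh i := by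
    rw [betaF, Finset.sum_image]
    intro i hi j hj hij
    simp only [Finset.coe_range, Set.mem_Iio] at hi hj
    by_contra hne
    rcases Nat.lt_or_ge i j with h | h
    · exact absurd hij (p.hh_strict h hj).ne'
    · exact absurd hij (p.hh_strict (by omega) hi).ne
  have h2 : ∑ i ∈ Finset.range p.parts.length, p.hh i
      = ∑ i ∈ Finset.range p.parts.length, p.parts.getD i 0
        + ∑ i ∈ Finset.range p.parts.length, (p.parts.length - 1 - i) := by
    rw [← Finset.sum_add_distrib]
    exact Finset.sum_congr rfl (fun i _ => rfl)
  have h3 : ∑ i ∈ Finset.range p.parts.length, p.parts.getD i 0 = p.size := by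
    rw [size]
    conv_rhs => rw [← List.ofFn_get p.parts]
    rw [List.sum_ofFn, ← Fin.sum_univ_eq_sum_range]
    apply Finset.sum_congr rfl
    intro i _
    rw [List.get_eq_getElem, p.getD_eq _ i.isLt]
  have h4 : ∑ i ∈ Finset.range p.parts.length, (p.parts.length - 1 - i)
      = ∑ i ∈ Finset.range p.parts.length, i :=
    Finset.sum_range_reflect (fun j => j) p.parts.length
  have h5 := Finset.sum_range_id_mul_two p.parts.length
  have h6 : ∑ i ∈ Finset.range p.parts.length, i
      = p.parts.length * (p.parts.length - 1) / 2 := by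
    generalize hA : p.parts.length * (p.parts.length - 1) = A at h5 ⊢
    omega
  rw [h1, h2, h3, h4, h6, p.card_betaF]

end CorePartition

lemma choose2_cast (k : ℕ) : (k : ℤ) * ((k : ℤ) - 1) / 2 = ((k * (k - 1) / 2 : ℕ) : ℤ) := by
  rcases Nat.eq_zero_or_pos k with rfl | hk
  · norm_num
  · have hev : 2 ∣ k * (k - 1) := by
      rcases Nat.even_or_odd k with he | ho
      · exact Dvd.dvd.mul_right he.two_dvd _
      · obtain ⟨m, hm⟩ := ho
        exact Dvd.dvd.mul_left (by omega : 2 ∣ (k - 1)) k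
    have h2 : k * (k - 1) / 2 * 2 = k * (k - 1) := Nat.div_mul_cancel hev
    have hc : (k : ℤ) * ((k : ℤ) - 1) = ((k * (k - 1) : ℕ) : ℤ) := by
      push_cast [Nat.cast_sub (by omega : 1 ≤ k)]
      ring
    rw [hc]
    generalize hA : k * (k - 1) = A at h2 ⊢
    omega
/-- Anderson's bijection: for coprime positive integers `s`, `t`, there is a bijection
between `(s,t)`-core partitions and order ideals of `P_{s,t}`, under which a partition
of size `size(λ)` corresponds to an ideal `I` with `|I| = k` satisfying
`size(λ) = (Σ_{a ∈ I} a) − k(k−1)/2`.  Consequently, the generating polynomial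
`Σ_λ q^{size(λ)}` is obtained from `Σ_I q^{Σ_{a ∈ I} a} t^{|I|}` by replacing each
power `t^k` with `q^{−k(k−1)/2}`. -/
theorem anderson_bijection (s t : ℕ) (hs : 0 < s) (ht : 0 < t) (hst : Nat.Coprime s t) :
    (∃ f : {p : CorePartition // p.IsCore s ∧ p.IsCore t} ≃
        {I : Set ℕ // IsOrderIdeal s t I},
      ∀ p : {p : CorePartition // p.IsCore s ∧ p.IsCore t},
        (p : CorePartition).size
            + (f p : Set ℕ).ncard * ((f p : Set ℕ).ncard - 1) / 2
          = ∑ᶠ a ∈ (f p : Set ℕ), a) ∧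
    (∀ q : ℝ, q ≠ 0 →
      (∑ᶠ p ∈ {p : CorePartition | p.IsCore s ∧ p.IsCore t},
          q ^ (CorePartition.size p))
        = ∑ᶠ I ∈ {I : Set ℕ | IsOrderIdeal s t I},
            q ^ ((∑ᶠ a ∈ I, (a : ℤ))
              - (I.ncard : ℤ) * ((I.ncard : ℤ) - 1) / 2)) := by
  classical
  -- every ideal comes from a partition
  have hback : ∀ I : Set ℕ, IsOrderIdeal s t I →
      ∃ p : CorePartition, (p.IsCore s ∧ p.IsCore t) ∧ (↑p.betaF : Set ℕ) = I := by
    intro I hI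
    have hIfin : I.Finite := (posetElems_finite hs ht hst).subset hI.1
    have hpos : ∀ x ∈ hIfin.toFinset, 0 < x := by
      intro x hx
      rw [Set.Finite.mem_toFinset] at hx
      have hxP := hI.1 hx
      rcases Nat.eq_zero_or_pos x with rfl | h
      · exact absurd ⟨0, 0, by simp⟩ hxP
      · exact h
    obtain ⟨p, hp⟩ := CorePartition.exists_partition hIfin.toFinset hpos
    have hcoe : (↑p.betaF : Set ℕ) = I := by rw [hp]; exact hIfin.coe_toFinset
    have hcore : p.IsCore s ∧ p.IsCore t :=
      (p.cores_iff_ideal hs ht).2 (by rw [hcoe]; exact hI)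
    exact ⟨p, hcore, hcoe⟩
  set φ : {p : CorePartition // p.IsCore s ∧ p.IsCore t} → {I : Set ℕ // IsOrderIdeal s t I} :=
    fun p => ⟨(↑p.1.betaF : Set ℕ), (p.1.cores_iff_ideal hs ht).1 p.2⟩ with hφ
  have hbij : Function.Bijective φ := by
    constructor
    · intro a b hab
      apply Subtype.ext
      apply CorePartition.betaF_inj
      apply Finset.coe_injective
      exact congrArg Subtype.val hab
    · rintro ⟨I, hI⟩
      obtain ⟨p, hcore, hcoe⟩ := hback I hI
      exact ⟨⟨p, hcore⟩, Subtype.ext hcoe⟩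
  -- the pointwise exponent computation
  have key : ∀ p : CorePartition, (p.IsCore s ∧ p.IsCore t) →
      ((p.size : ℤ)) = (∑ᶠ a ∈ (↑p.betaF : Set ℕ), (a : ℤ))
        - ((↑p.betaF : Set ℕ).ncard : ℤ) * (((↑p.betaF : Set ℕ).ncard : ℤ) - 1) / 2 := by
    intro p _
    have e1 : (∑ᶠ a ∈ (↑p.betaF : Set ℕ), (a : ℤ)) = ((∑ x ∈ p.betaF, x : ℕ) : ℤ) := by
      rw [finsum_mem_coe_finset, Nat.cast_sum]
    rw [e1, Set.ncard_coe_finset, choose2_cast]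
    have n1 := p.size_add_eq_sum
    generalize hA : p.betaF.card * (p.betaF.card - 1) / 2 = A at n1 ⊢
    generalize hB : ∑ x ∈ p.betaF, x = B at n1 ⊢
    omega
  constructor
  · refine ⟨Equiv.ofBijective φ hbij, ?_⟩
    intro p
    have hval : ((Equiv.ofBijective φ hbij) p : Set ℕ) = (↑p.1.betaF : Set ℕ) := rfl
    rw [hval, Set.ncard_coe_finset, finsum_mem_coe_finset]
    exact p.1.size_add_eq_sum
  · intro q hq
    refine finsum_mem_eq_of_bijOn (fun p : CorePartition => (↑p.betaF : Set ℕ)) ?_ ?_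
    · refine ⟨?_, ?_, ?_⟩
      · intro p hp
        exact (p.cores_iff_ideal hs ht).1 hp
      · intro a _ b _ hab
        exact CorePartition.betaF_inj (Finset.coe_injective hab)
      · intro I hI
        obtain ⟨p, hcore, hcoe⟩ := hback I hI
        exact ⟨p, hcore, hcoe⟩
    · intro p hp
      have hz := key p hp
      rw [← hz, zpow_natCast]
end
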